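/- In the quantum torus L_q[H] of dimension k (generated by invertible elements x_1,...,x_k with x_i x_j = q^{h_{ij}} x_j x_i, for q not a root of unity), every unit (invertible element) is a nonzero scalar multiple of a monomial x^a = x_1^{a_1} ... x_k^{a_k} for some a in Z^k. -/

import Mathlib

open scoped Matrix

/-- The ordered monomial `x^a = x₁^{a₁} ⋯ x_k^{a_k}` in a quantum torus. -/
noncomputable def qtMonomial {A : Type*} [Ring A] {k : ℕ} (x : Fin k → Aˣ)
    (a : Fin k → ℤ) : Aˣ :=
  ((List.finRange k).map fun i => x i ^ a i).prod

section QT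

variable {A : Type*} [Ring A] [Algebra ℂ A]

/-- Quasi-commutation of two units up to a nonzero scalar. -/
def QtQC (u v : Aˣ) : Prop := ∃ c : ℂˣ, (u : A) * v = (c : ℂ) • ((v : A) * u)

lemma qtQC_symm {u v : Aˣ} (h : QtQC u v) : QtQC v u := by
  obtain ⟨c, hc⟩ := h
  refine ⟨c⁻¹, ?_⟩
  rw [hc, smul_smul]
  simp

lemma qtQC_mul_left {u w v : Aˣ} (hu : QtQC u v) (hw : QtQC w v) : QtQC (u * w) v := by
  obtain ⟨c, hc⟩ := hu
  obtain ⟨d, hd⟩ := hw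
  refine ⟨c * d, ?_⟩
  push_cast
  calc (u : A) * w * v = (u : A) * ((w : A) * v) := by rw [mul_assoc]
    _ = (d : ℂ) • ((u : A) * ((v : A) * w)) := by rw [hd, mul_smul_comm]
    _ = (d : ℂ) • (((u : A) * v) * w) := by rw [mul_assoc]
    _ = (d : ℂ) • (((c : ℂ) • ((v : A) * u)) * w) := by rw [hc]
    _ = ((c : ℂ) * d) • ((v : A) * (u * w)) := by
        rw [smul_mul_assoc, smul_smul, mul_assoc, mul_comm (d : ℂ)]

lemma qtQC_one_left {v : Aˣ} : QtQC 1 v := ⟨1, by simp⟩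

lemma qtQC_inv_left {u v : Aˣ} (h : QtQC u v) : QtQC u⁻¹ v := by
  obtain ⟨c, hc⟩ := h
  refine ⟨c⁻¹, ?_⟩
  have key : (v : A) * u⁻¹ = (c : ℂ) • (((u⁻¹ : Aˣ) : A) * v) := by
    have := congrArg (fun y => ((u⁻¹ : Aˣ) : A) * y * ((u⁻¹ : Aˣ) : A)) hc
    simpa [mul_assoc, mul_smul_comm, smul_mul_assoc] using this
  rw [key, smul_smul]
  simp

lemma qtQC_pow_left {u v : Aˣ} (h : QtQC u v) (n : ℕ) : QtQC (u ^ n) v := by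
  induction n with
  | zero => simpa using qtQC_one_left
  | succ m ih => rw [pow_succ]; exact qtQC_mul_left ih h

lemma qtQC_zpow_left {u v : Aˣ} (h : QtQC u v) (n : ℤ) : QtQC (u ^ n) v := by
  cases n with
  | ofNat m => simpa using qtQC_pow_left h m
  | negSucc m => rw [zpow_negSucc]; exact qtQC_inv_left (qtQC_pow_left h (m + 1))

lemma qtQC_list_prod {u : Aˣ} {L : List Aˣ} (h : ∀ w ∈ L, QtQC u w) : QtQC u L.prod := by
  induction L with
  | nil => exact qtQC_symm qtQC_one_left
  | cons w L' ih =>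
      rw [List.prod_cons]
      exact qtQC_symm (qtQC_mul_left (qtQC_symm (h w (by simp)))
        (qtQC_symm (ih fun w' hw' => h w' (by simp [hw']))))

end QT

section QT2
variable {A : Type*} [Ring A] [Algebra ℂ A] {k : ℕ}

lemma qt_list_prod_mul (x : Fin k → Aˣ) (hqc : ∀ i j, QtQC (x i) (x j)) :
    ∀ (L : List (Fin k)) (a b : Fin k → ℤ),
      ∃ c : ℂˣ, (((L.map fun i => x i ^ a i).prod : Aˣ) : A)
          * (((L.map fun i => x i ^ b i).prod : Aˣ) : A)
        = (c : ℂ) • ((((L.map fun i => x i ^ (a i + b i)).prod : Aˣ)) : A) := by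
  intro L
  induction L with
  | nil => intro a b; exact ⟨1, by simp⟩
  | cons i L' ih =>
      intro a b
      obtain ⟨c2, hc2⟩ := ih a b
      have hqcP : QtQC (x i ^ b i) ((L'.map fun j => x j ^ a j).prod) := by
        refine qtQC_list_prod ?_
        intro w hw
        simp only [List.mem_map] at hw
        obtain ⟨j, _, rfl⟩ := hw
        exact qtQC_symm (qtQC_zpow_left (qtQC_symm (qtQC_zpow_left (hqc i j) (b i))) (a j))
      obtain ⟨c1, hc1⟩ := hqcP
      refine ⟨c1⁻¹ * c2, ?_⟩
      set P : Aˣ := (L'.map fun j => x j ^ a j).prod with hP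
      set Q : Aˣ := (L'.map fun j => x j ^ b j).prod with hQ
      set R : Aˣ := (L'.map fun j => x j ^ (a j + b j)).prod with hR
      have hPb : (P : A) * (x i ^ b i : Aˣ) = ((c1 : ℂ))⁻¹ • (((x i ^ b i : Aˣ) : A) * P) := by
        rw [hc1, smul_smul, inv_mul_cancel₀ c1.ne_zero, one_smul]
      calc ((x i ^ a i : Aˣ) : A) * P * ((x i ^ b i : Aˣ) * Q)
          = (x i ^ a i : Aˣ) * ((P : A) * (x i ^ b i : Aˣ)) * Q := by
            simp only [mul_assoc]
        _ = (x i ^ a i : Aˣ) * (((c1 : ℂ))⁻¹ • (((x i ^ b i : Aˣ) : A) * P)) * Q := by rw [hPb]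
        _ = ((c1 : ℂ))⁻¹ • (((x i ^ a i : Aˣ) : A) * (x i ^ b i : Aˣ) * ((P : A) * Q)) := by
            rw [mul_smul_comm, smul_mul_assoc]
            simp only [mul_assoc]
        _ = ((c1 : ℂ))⁻¹ • (((x i ^ (a i + b i) : Aˣ) : A) * ((c2 : ℂ) • (R : A))) := by
            rw [← hc2, ← Units.val_mul, ← zpow_add]
        _ = ((c1⁻¹ * c2 : ℂˣ) : ℂ) • (((x i ^ (a i + b i) : Aˣ) : A) * R) := by
            rw [mul_smul_comm, smul_smul]
            push_cast
            ring_nf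
      -- done

lemma qtMonomial_zero (x : Fin k → Aˣ) : qtMonomial x 0 = 1 := by
  unfold qtMonomial
  rw [List.prod_eq_one]
  intro u hu
  simp only [List.mem_map] at hu
  obtain ⟨i, _, rfl⟩ := hu
  simp

lemma qtMonomial_mul (x : Fin k → Aˣ) (hqc : ∀ i j, QtQC (x i) (x j)) (a b : Fin k → ℤ) :
    ∃ c : ℂˣ, (qtMonomial x a : A) * (qtMonomial x b : A)
      = (c : ℂ) • ((qtMonomial x (a + b) : Aˣ) : A) := by
  obtain ⟨c, hc⟩ := qt_list_prod_mul x hqc (List.finRange k) a b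
  exact ⟨c, hc⟩

noncomputable instance qtLexGroup : IsOrderedCancelAddMonoid (Lex (Fin k → ℤ)) := by
  have h : WellFoundedLT (Fin k) := inferInstance
  exact inferInstance

end QT2

open scoped Matrix

theorem stmt1 {k : ℕ} (q : ℂ) (hq0 : q ≠ 0) (hq : ∀ r : ℕ, 0 < r → q ^ r ≠ 1)
    (H : Matrix (Fin k) (Fin k) ℤ) (hH : Hᵀ = -H)
    {A : Type*} [Ring A] [Algebra ℂ A]
    (x : Fin k → Aˣ)
    (hrel : ∀ i j, (x i : A) * (x j : A) = q ^ (H i j) • ((x j : A) * (x i : A)))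
    (b : Module.Basis (Fin k → ℤ) ℂ A)
    (hb : ∀ a : Fin k → ℤ, b a = (qtMonomial x a : A)) :
    ∀ u : Aˣ, ∃ (c : ℂ) (a : Fin k → ℤ), c ≠ 0 ∧ (u : A) = c • (qtMonomial x a : A) := by
  have hqc : ∀ i j, QtQC (x i) (x j) := by
    intro i j
    refine ⟨Units.mk0 q hq0 ^ H i j, ?_⟩
    rw [hrel i j]
    norm_num
  choose c hc using qtMonomial_mul x hqc
  -- b.repr 1
  have hb1 : b.repr 1 = Finsupp.single (0 : Fin k → ℤ) 1 := by
    have : (1 : A) = b 0 := by rw [hb 0, qtMonomial_zero, Units.val_one]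
    rw [this, b.repr_self]
  intro u
  set f := b.repr ↑u with hf
  set g := b.repr ↑u⁻¹ with hg
  have hu : (↑u : A) = ∑ a ∈ f.support, f a • ((qtMonomial x a : Aˣ) : A) := by
    conv_lhs => rw [← b.linearCombination_repr ↑u]
    rw [Finsupp.linearCombination_apply, Finsupp.sum]
    exact Finset.sum_congr rfl fun a _ => by rw [hb]
  have hv : (↑u⁻¹ : A) = ∑ a ∈ g.support, g a • ((qtMonomial x a : Aˣ) : A) := by
    conv_lhs => rw [← b.linearCombination_repr ↑u⁻¹]
    rw [Finsupp.linearCombination_apply, Finsupp.sum]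
    exact Finset.sum_congr rfl fun a _ => by rw [hb]
  have key : ∀ s : Fin k → ℤ, Finsupp.single (0 : Fin k → ℤ) (1 : ℂ) s
      = ∑ a ∈ f.support, ∑ a' ∈ g.support,
          (if a + a' = s then f a * g a' * ((c a a' : ℂˣ) : ℂ) else 0) := by
    intro s
    have h1 : (1 : A) = ∑ a ∈ f.support, ∑ a' ∈ g.support,
        (f a * g a' * ((c a a' : ℂˣ) : ℂ)) • ((qtMonomial x (a + a') : Aˣ) : A) := by
      calc (1 : A) = (↑u : A) * ↑u⁻¹ := by rw [← Units.val_mul, mul_inv_cancel, Units.val_one]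
        _ = _ := by
            rw [hu, hv, Finset.sum_mul_sum]
            refine Finset.sum_congr rfl fun a _ => Finset.sum_congr rfl fun a' _ => ?_
            rw [smul_mul_assoc, mul_smul_comm, smul_smul, hc a a', smul_smul, mul_assoc]
    have h2 : b.repr 1 = ∑ a ∈ f.support, ∑ a' ∈ g.support,
        (f a * g a' * ((c a a' : ℂˣ) : ℂ)) • Finsupp.single (a + a') (1 : ℂ) := by
      rw [h1]
      rw [map_sum]
      refine Finset.sum_congr rfl fun a _ => ?_
      rw [map_sum]
      refine Finset.sum_congr rfl fun a' _ => ?_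
      rw [map_smul, ← hb, b.repr_self]
    rw [← hb1]
    rw [h2, Finsupp.finset_sum_apply]
    refine Finset.sum_congr rfl fun a _ => ?_
    rw [Finsupp.finset_sum_apply]
    refine Finset.sum_congr rfl fun a' _ => ?_
    rw [Finsupp.smul_apply, Finsupp.single_apply]
    by_cases h : a + a' = s <;> simp [h]
  -- supports nonempty
  have hfne : f.support.Nonempty := by
    by_contra h
    rw [Finset.not_nonempty_iff_eq_empty] at h
    have hk := key 0
    rw [h, Finset.sum_empty, Finsupp.single_eq_same] at hk
    exact one_ne_zero hk
  have hgne : g.support.Nonempty := by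
    by_contra h
    rw [Finset.not_nonempty_iff_eq_empty] at h
    have hk := key 0
    simp only [h, Finset.sum_empty, Finsupp.single_eq_same] at hk
    simp at hk
  -- generic extremal argument
  have main : ∀ (P Q : Fin k → ℤ), P ∈ f.support → Q ∈ g.support →
      (∀ a ∈ f.support, ∀ a' ∈ g.support, a + a' = P + Q → a = P ∧ a' = Q) → P + Q = 0 := by
    intro P Q hP hQ huniq
    have hk := key (P + Q)
    have hsum : (∑ a ∈ f.support, ∑ a' ∈ g.support,
        (if a + a' = P + Q then f a * g a' * ((c a a' : ℂˣ) : ℂ) else 0))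
        = f P * g Q * ((c P Q : ℂˣ) : ℂ) := by
      rw [Finset.sum_eq_single P]
      · rw [Finset.sum_eq_single Q]
        · rw [if_pos rfl]
        · intro a' ha' hne
          rw [if_neg]
          intro h
          exact hne (huniq P hP a' ha' h).2
        · intro h; exact absurd hQ h
      · intro a ha hne
        refine Finset.sum_eq_zero fun a' ha' => ?_
        rw [if_neg]
        intro h
        exact hne (huniq a ha a' ha' h).1
      · intro h; exact absurd hP h
    rw [hsum] at hk
    by_contra h0
    rw [Finsupp.single_apply, if_neg (fun h => h0 h.symm)] at hk
    exact (mul_ne_zero (mul_ne_zero (Finsupp.mem_support_iff.mp hP)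
      (Finsupp.mem_support_iff.mp hQ)) (Units.ne_zero _)) hk.symm
  -- extremes
  haveI : WellFoundedLT (Fin k) := inferInstance
  obtain ⟨Af, hAfm, hAfle⟩ := f.support.exists_max_image (α := Lex (Fin k → ℤ)) (toLex : (Fin k → ℤ) → Lex (Fin k → ℤ)) hfne
  obtain ⟨Bf, hBfm, hBfle⟩ := g.support.exists_max_image (α := Lex (Fin k → ℤ)) (toLex : (Fin k → ℤ) → Lex (Fin k → ℤ)) hgne
  obtain ⟨Am, hAmm, hAmle⟩ := f.support.exists_min_image (α := Lex (Fin k → ℤ)) (toLex : (Fin k → ℤ) → Lex (Fin k → ℤ)) hfne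
  obtain ⟨Bm, hBmm, hBmle⟩ := g.support.exists_min_image (α := Lex (Fin k → ℤ)) (toLex : (Fin k → ℤ) → Lex (Fin k → ℤ)) hgne
  have hadd : ∀ a a' : Fin k → ℤ, toLex (a + a') = toLex a + toLex a' := fun _ _ => rfl
  have pairmax : ∀ a ∈ f.support, ∀ a' ∈ g.support, a + a' = Af + Bf → a = Af ∧ a' = Bf := by
    intro a ha a' ha' hs
    have h1 : toLex a ≤ toLex Af := hAfle a ha
    have h2 : toLex a' ≤ toLex Bf := hBfle a' ha'
    have h3 : toLex a + toLex a' = toLex Af + toLex Bf := by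
      rw [← hadd, ← hadd, hs]
    have e1 : toLex a = toLex Af := le_antisymm h1 (by
      have : toLex Af + toLex a' ≤ toLex Af + toLex Bf := add_le_add_right h2 _
      rw [← h3] at this
      exact le_of_add_le_add_right (by rwa [add_comm (toLex a), add_comm (toLex Af)] at this))
    refine ⟨toLex.injective e1, toLex.injective ?_⟩
    have := h3
    rw [e1] at this
    exact add_left_cancel this
  have pairmin : ∀ a ∈ f.support, ∀ a' ∈ g.support, a + a' = Am + Bm → a = Am ∧ a' = Bm := by
    intro a ha a' ha' hs
    have h1 : toLex Am ≤ toLex a := hAmle a ha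
    have h2 : toLex Bm ≤ toLex a' := hBmle a' ha'
    have h3 : toLex a + toLex a' = toLex Am + toLex Bm := by
      rw [← hadd, ← hadd, hs]
    have e1 : toLex a = toLex Am := by
      refine le_antisymm ?_ h1
      exact le_of_add_le_add_right (by
        calc toLex a + toLex Bm ≤ toLex a + toLex a' := add_le_add le_rfl h2
          _ = toLex Am + toLex Bm := h3)
    refine ⟨toLex.injective e1, toLex.injective ?_⟩
    have h7 := h3
    rw [e1] at h7
    exact add_left_cancel h7
  have hmax0 : Af + Bf = 0 := main Af Bf hAfm hBfm pairmax
  have hmin0 : Am + Bm = 0 := main Am Bm hAmm hBmm pairmin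
  -- Af = Am
  have hAfAm : toLex Af = toLex Am := by
    refine le_antisymm ?_ (hAmle Af hAfm)
    have h3 : toLex Af + toLex Bf = toLex Am + toLex Bm := by
      rw [← hadd, ← hadd, hmax0, hmin0]
    have h4 : toLex Af + toLex Bm ≤ toLex Am + toLex Bm := by
      rw [← h3]
      exact add_le_add le_rfl (hBmle Bf hBfm)
    exact le_of_add_le_add_right h4
  have hsingle : f.support = {Af} := by
    apply Finset.eq_singleton_iff_unique_mem.mpr
    refine ⟨hAfm, fun a ha => toLex.injective (le_antisymm (hAfle a ha) ?_)⟩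
    rw [hAfAm]
    exact hAmle a ha
  refine ⟨f Af, Af, Finsupp.mem_support_iff.mp hAfm, ?_⟩
  rw [hu, hsingle, Finset.sum_singleton]
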